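/- Let (u_p, u_e) be a solution of the bulk system which is positive on [0, R) for some finite R and such that both u_p(r) → 0 and u_e(r) → 0 as r → R (both densities vanish at the same point). Then the solution is a special (proportional) solution: u_e is a constant positive multiple of u_p on [0, R). -/

import Mathlib

open Set Filter

noncomputable section

/-- `(u_p, u_e)` is a solution of the bulk system on the set `s ⊆ [0,∞)` (which should
contain `0`): both functions are `C²` on `s`, satisfy the initial conditions
`u_p(0) = α`, `u_e(0) = β`, `u_p'(0) = u_e'(0) = 0`, are positive on `s`, and satisfy
`u_p'' + (2/r) u_p' = F u_p^{3/2} − E u_e^{3/2}`,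
`u_e'' + (2/r) u_e' = B u_e^{3/2} − A u_p^{3/2}` at every `r ∈ s` with `r > 0`. -/
def IsBulkSolOn (A B E F α β : ℝ) (s : Set ℝ) (up ue : ℝ → ℝ) : Prop :=
  ContDiffOn ℝ 2 up s ∧ ContDiffOn ℝ 2 ue s ∧
  up 0 = α ∧ ue 0 = β ∧
  derivWithin up s 0 = 0 ∧ derivWithin ue s 0 = 0 ∧
  (∀ r ∈ s, 0 < r →
    derivWithin (derivWithin up s) s r + 2 / r * derivWithin up s r
      = F * up r ^ ((3:ℝ)/2) - E * ue r ^ ((3:ℝ)/2) ∧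
    derivWithin (derivWithin ue s) s r + 2 / r * derivWithin ue s r
      = B * ue r ^ ((3:ℝ)/2) - A * up r ^ ((3:ℝ)/2)) ∧
  (∀ r ∈ s, 0 < up r ∧ 0 < ue r)

/-- Maximum-principle lemma: if `τ` is `C²` on `[0,R)`, satisfies
`τ'' + (2/x) τ' ≥ 0` wherever `τ > 0` (with `x > 0`), and tends to `0` at `R`,
then `τ ≤ 0` on `[0,R)`. -/
lemma aux_nonpos {R : ℝ} (hR : 0 < R) (τ : ℝ → ℝ)
    (hτc : ContDiffOn ℝ 2 τ (Ico 0 R))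
    (hode : ∀ x ∈ Ico 0 R, 0 < x → 0 < τ x →
      0 ≤ derivWithin (derivWithin τ (Ico 0 R)) (Ico 0 R) x
          + 2 / x * derivWithin τ (Ico 0 R) x)
    (hlim : Tendsto τ (nhdsWithin R (Iio R)) (nhds 0)) :
    ∀ r ∈ Ico 0 R, τ r ≤ 0 := by
  by_contra hcon
  push_neg at hcon
  obtain ⟨r₁, hr₁, hτr₁⟩ := hcon
  have hsU : UniqueDiffOn ℝ (Ico 0 R) := uniqueDiffOn_Ico 0 R
  set τ' : ℝ → ℝ := fun x => if x < R then τ x else 0 with hτ'def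
  have hτcont : ContinuousOn τ (Ico 0 R) := hτc.continuousOn
  have hIcoIcc : Icc (0:ℝ) R ∩ Iio R = Ico 0 R := by
    ext y
    simp only [mem_inter_iff, mem_Icc, mem_Iio, mem_Ico]
    exact ⟨fun ⟨⟨a, _⟩, c⟩ => ⟨a, c⟩, fun ⟨a, c⟩ => ⟨⟨a, c.le⟩, c⟩⟩
  have hext : ContinuousOn τ' (Icc 0 R) := by
    intro x hx
    rcases lt_or_eq_of_le hx.2 with hxR | hxR
    · have hIio : Iio R ∈ nhds x := Iio_mem_nhds hxR
      have h2 : ContinuousWithinAt τ (Icc 0 R) x := by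
        have hrw : nhdsWithin x (Icc 0 R) = nhdsWithin x (Icc 0 R ∩ Iio R) :=
          nhdsWithin_restrict' _ hIio
        unfold ContinuousWithinAt
        rw [hrw, hIcoIcc]
        exact hτcont x ⟨hx.1, hxR⟩
      refine h2.congr_of_eventuallyEq ?_ ?_
      · filter_upwards [mem_nhdsWithin_of_mem_nhds hIio] with y hy
        have hy' : y < R := hy
        simp [hτ'def, hy']
      · simp [hτ'def, hxR]
    · subst hxR
      have hsplit : Icc (0:ℝ) x = Ico 0 x ∪ {x} := by
        ext y
        simp only [mem_Icc, mem_union, mem_Ico, mem_singleton_iff]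
        constructor
        · rintro ⟨a, b⟩
          rcases lt_or_eq_of_le b with h | h
          · exact Or.inl ⟨a, h⟩
          · exact Or.inr h
        · rintro (⟨a, b⟩ | h)
          · exact ⟨a, b.le⟩
          · exact ⟨by simpa [h] using hx.1, h.le⟩
      have hval : τ' x = 0 := by simp [hτ'def]
      unfold ContinuousWithinAt
      rw [hsplit, nhdsWithin_union, hval]
      refine Tendsto.sup ?_ ?_
      · have h1 : Tendsto τ (nhdsWithin x (Ico 0 x)) (nhds 0) :=
          hlim.mono_left (nhdsWithin_mono _ Ico_subset_Iio_self)
        refine h1.congr' ?_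
        filter_upwards [self_mem_nhdsWithin] with y hy
        simp [hτ'def, hy.2]
      · rw [nhdsWithin_singleton]
        simpa [hτ'def] using tendsto_pure_nhds τ' x
  obtain ⟨r₀, hr₀Icc, hr₀max⟩ :=
    isCompact_Icc.exists_isMaxOn ⟨0, left_mem_Icc.2 hR.le⟩ hext
  set M := τ' r₀ with hM
  have hMpos : 0 < M := by
    have h1 : τ' r₁ ≤ M := hr₀max (Icc_subset_Icc_right le_rfl (Ico_subset_Icc_self hr₁))
    have h2 : τ' r₁ = τ r₁ := by simp [hτ'def, hr₁.2]
    rw [h2] at h1; linarith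
  have hr₀R : r₀ ≠ R := by
    intro h
    rw [hM, h] at hMpos
    simp [hτ'def] at hMpos
  have hr₀ : r₀ ∈ Ico 0 R := ⟨hr₀Icc.1, lt_of_le_of_ne hr₀Icc.2 hr₀R⟩
  have hMτ : τ r₀ = M := by simp [hM, hτ'def, hr₀.2]
  set g := derivWithin τ (Ico 0 R) with hg
  have hg1 : ContDiffOn ℝ 1 g (Ico 0 R) := hτc.derivWithin hsU (by norm_num)
  have hgcont : ContinuousOn g (Ico 0 R) := hg1.continuousOn
  have hstar : r₀ ^ 2 * g r₀ = 0 := by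
    rcases eq_or_lt_of_le hr₀.1 with h0 | h0
    · rw [← h0]; ring
    · have hnhds : Ico 0 R ∈ nhds r₀ :=
        mem_of_superset (Ioo_mem_nhds h0 hr₀.2) Ioo_subset_Ico_self
      have hloc : IsLocalMax τ' r₀ :=
        hr₀max.isLocalMax (Icc_mem_nhds h0 hr₀.2)
      have hd0 : deriv τ' r₀ = 0 := hloc.deriv_eq_zero
      have heq : τ' =ᶠ[nhds r₀] τ := by
        filter_upwards [Iio_mem_nhds hr₀.2] with y hy
        have hy' : y < R := hy
        simp [hτ'def, hy']
      have hdτ : deriv τ r₀ = 0 := by rw [← heq.deriv_eq]; exact hd0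
      have : g r₀ = 0 := by rw [hg, derivWithin_of_mem_nhds hnhds, hdτ]
      rw [this]; ring
  have hmain : ∀ t ∈ Ioo r₀ R, M ≤ τ t := by
    intro t ht
    by_contra hlt
    push_neg at hlt
    set c := max ((τ t + M) / 2) (M / 2) with hc
    have hc1 : τ t < c := lt_of_lt_of_le (by linarith) (le_max_left _ _)
    have hc2 : c < M := max_lt (by linarith) (by linarith)
    have hc0 : 0 < c := lt_of_lt_of_le (by linarith) (le_max_right _ _)
    have hsub : Icc r₀ t ⊆ Ico 0 R := fun x hx =>
      ⟨le_trans hr₀.1 hx.1, lt_of_le_of_lt hx.2 ht.2⟩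
    set S := Icc r₀ t ∩ τ ⁻¹' (Iic c) with hSdef
    have hScl : IsClosed S :=
      (hτcont.mono hsub).preimage_isClosed_of_isClosed isClosed_Icc isClosed_Iic
    have hSne : S.Nonempty := ⟨t, ⟨le_of_lt ht.1, le_rfl⟩, hc1.le⟩
    have hSbdd : BddBelow S := ⟨r₀, fun x hx => hx.1.1⟩
    set z := sInf S with hz
    have hzS : z ∈ S := hScl.csInf_mem hSne hSbdd
    have hzc : τ z ≤ c := hzS.2
    have hr₀z : r₀ < z := by
      rcases lt_or_eq_of_le hzS.1.1 with h | h
      · exact h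
      · exfalso; rw [← h, hMτ] at hzc; linarith
    have hgt : ∀ x ∈ Ico r₀ z, c < τ x := by
      intro x hx
      by_contra hle
      push_neg at hle
      have hxS : x ∈ S := ⟨⟨hx.1, le_trans hx.2.le hzS.1.2⟩, hle⟩
      exact absurd (csInf_le hSbdd hxS) (not_le.2 hx.2)
    have hzIcc : Icc r₀ z ⊆ Ico 0 R := fun x hx =>
      hsub ⟨hx.1, le_trans hx.2 hzS.1.2⟩
    have hzc' : c ≤ τ z := by
      have hcw : ContinuousWithinAt τ (Ioo r₀ z) z :=
        (hτcont z (hzIcc (right_mem_Icc.2 hr₀z.le))).mono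
          (fun x hx => hzIcc (Ioo_subset_Icc_self hx))
      haveI : (nhdsWithin z (Ioo r₀ z)).NeBot := right_nhdsWithin_Ioo_neBot hr₀z
      refine ge_of_tendsto hcw ?_
      filter_upwards [self_mem_nhdsWithin] with y hy
      exact (hgt y ⟨hy.1.le, hy.2⟩).le
    have hpos : ∀ x ∈ Icc r₀ z, 0 < τ x := by
      intro x hx
      rcases lt_or_eq_of_le hx.2 with h | h
      · exact hc0.trans (hgt x ⟨hx.1, h⟩)
      · rw [h]; linarith
    have hdh : ∀ x ∈ Ioo r₀ z,
        HasDerivAt (fun y => y ^ 2 * g y)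
          (2 * x * g x + x ^ 2 * derivWithin g (Ico 0 R) x) x ∧
        0 ≤ 2 * x * g x + x ^ 2 * derivWithin g (Ico 0 R) x := by
      intro x hx
      have hx0 : 0 < x := lt_of_le_of_lt hr₀.1 hx.1
      have hxR : x < R := lt_of_lt_of_le (lt_of_lt_of_le hx.2 hzS.1.2) ht.2.le
      have hxs : x ∈ Ico 0 R := ⟨hx0.le, hxR⟩
      have hnh : Ico 0 R ∈ nhds x :=
        mem_of_superset (Ioo_mem_nhds hx0 hxR) Ioo_subset_Ico_self
      have hgd : DifferentiableAt ℝ g x :=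
        ((hg1.differentiableOn one_ne_zero) x hxs).differentiableAt hnh
      have hgx : HasDerivAt g (derivWithin g (Ico 0 R) x) x := by
        rw [derivWithin_of_mem_nhds hnh]; exact hgd.hasDerivAt
      have hsq : HasDerivAt (fun y : ℝ => y ^ 2) (2 * x) x := by
        simpa using hasDerivAt_pow 2 x
      have hmul := hsq.mul hgx
      constructor
      · exact hmul
      · have hτpos : 0 < τ x := hpos x (Ioo_subset_Icc_self hx)
        have hode' := hode x hxs hx0 hτpos
        have hrw : 2 * x * g x + x ^ 2 * derivWithin g (Ico 0 R) x
            = x ^ 2 * (derivWithin g (Ico 0 R) x + 2 / x * g x) := by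
          have hxne : x ≠ 0 := hx0.ne'
          field_simp
          ring
        rw [hrw]
        exact mul_nonneg (sq_nonneg x) hode'
    have hhmono : MonotoneOn (fun x => x ^ 2 * g x) (Icc r₀ z) := by
      apply monotoneOn_of_deriv_nonneg (convex_Icc _ _)
      · exact (continuous_pow 2).continuousOn.mul (hgcont.mono hzIcc)
      · rw [interior_Icc]
        intro x hx
        exact ((hdh x hx).1.differentiableAt).differentiableWithinAt
      · rw [interior_Icc]
        intro x hx
        rw [(hdh x hx).1.deriv]
        exact (hdh x hx).2
    have hgnn : ∀ x ∈ Ioo r₀ z, 0 ≤ deriv τ x := by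
      intro x hx
      have hx0 : 0 < x := lt_of_le_of_lt hr₀.1 hx.1
      have hxR : x < R := lt_of_lt_of_le (lt_of_lt_of_le hx.2 hzS.1.2) ht.2.le
      have hnh : Ico 0 R ∈ nhds x :=
        mem_of_superset (Ioo_mem_nhds hx0 hxR) Ioo_subset_Ico_self
      have h1 : (0:ℝ) ≤ x ^ 2 * g x := by
        have h2 := hhmono (left_mem_Icc.2 hr₀z.le) (Ioo_subset_Icc_self hx) hx.1.le
        simp only at h2
        linarith [hstar]
      have hx2 : 0 < x ^ 2 := by positivity
      have hgx : 0 ≤ g x := by nlinarith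
      have : deriv τ x = g x := by rw [hg, derivWithin_of_mem_nhds hnh]
      rw [this]; exact hgx
    have hτmono : MonotoneOn τ (Icc r₀ z) := by
      apply monotoneOn_of_deriv_nonneg (convex_Icc _ _) (hτcont.mono hzIcc)
      · rw [interior_Icc]
        intro x hx
        have hx0 : 0 < x := lt_of_le_of_lt hr₀.1 hx.1
        have hxR : x < R := lt_of_lt_of_le (lt_of_lt_of_le hx.2 hzS.1.2) ht.2.le
        have hnh : Ico 0 R ∈ nhds x :=
          mem_of_superset (Ioo_mem_nhds hx0 hxR) Ioo_subset_Ico_self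
        exact (((hτc.differentiableOn (by norm_num)) x ⟨hx0.le, hxR⟩).differentiableAt
          hnh).differentiableWithinAt
      · rw [interior_Icc]
        exact hgnn
    have hfin := hτmono (left_mem_Icc.2 hr₀z.le) (right_mem_Icc.2 hr₀z.le) hr₀z.le
    rw [hMτ] at hfin
    linarith
  have hev : ∀ᶠ t in nhdsWithin R (Iio R), M ≤ τ t := by
    filter_upwards [Ioo_mem_nhdsLT hr₀.2] with y hy using hmain y hy
  have : M ≤ 0 := ge_of_tendsto hlim hev
  linarith

/-- Existence of the proportionality constant `k`. -/
lemma exists_k {A B E F : ℝ} (hA : 0 < A) (hB : 0 < B) (hE : 0 < E) (hF : 0 < F)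
    (hEF : F < E) :
    ∃ k : ℝ, 0 < k ∧ (B + k * E) * k ^ ((3:ℝ)/2) = A + k * F := by
  set f : ℝ → ℝ := fun k => (B + k * E) * k ^ ((3:ℝ)/2) - (A + k * F) with hf
  have h32 : Continuous (fun k : ℝ => k ^ ((3:ℝ)/2)) := by
    rw [continuous_iff_continuousAt]
    intro x
    exact Real.continuousAt_rpow_const x _ (Or.inr (by norm_num))
  have hcont : Continuous f := by
    apply Continuous.sub
    · exact (continuous_const.add (continuous_id.mul continuous_const)).mul h32
    · exact continuous_const.add (continuous_id.mul continuous_const)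
  set K := max 1 (A / B) with hK
  have hK1 : (1:ℝ) ≤ K := le_max_left _ _
  have hKA : A / B ≤ K := le_max_right _ _
  have hKpos : 0 < K := by linarith
  have hf0 : f 0 < 0 := by
    simp only [hf, zero_mul, add_zero]
    rw [Real.zero_rpow (by norm_num : ((3:ℝ)/2) ≠ 0)]
    linarith
  have hfK : 0 ≤ f K := by
    have h1 : K ≤ K ^ ((3:ℝ)/2) := by
      calc K = K ^ (1:ℝ) := (Real.rpow_one K).symm
        _ ≤ K ^ ((3:ℝ)/2) := Real.rpow_le_rpow_of_exponent_le hK1 (by norm_num)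
    have hBK : A ≤ B * K := by
      rw [div_le_iff₀ hB] at hKA; linarith
    have hBKE : (0:ℝ) < B + K * E := by positivity
    have h2 : (B + K * E) * K ≤ (B + K * E) * K ^ ((3:ℝ)/2) :=
      mul_le_mul_of_nonneg_left h1 hBKE.le
    have h4 : K * F ≤ K * E := mul_le_mul_of_nonneg_left hEF.le hKpos.le
    have h5 : K * E ≤ K * E * K := le_mul_of_one_le_right (by positivity) hK1
    have h3 : A + K * F ≤ (B + K * E) * K := by nlinarith
    simp only [hf]
    linarith
  have hKmem : (0:ℝ) ∈ Icc (f 0) (f K) := ⟨hf0.le, hfK⟩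
  obtain ⟨k, hkmem, hfk⟩ := intermediate_value_Icc hKpos.le hcont.continuousOn hKmem
  have hk0 : 0 < k := by
    rcases lt_or_eq_of_le hkmem.1 with h | h
    · exact h
    · exfalso; rw [← h] at hfk; rw [hfk] at hf0; exact lt_irrefl 0 hf0
  refine ⟨k, hk0, ?_⟩
  have := hfk
  simp only [hf] at this
  linarith

/-- Lemma 5.6: if both densities vanish at the same finite radius, then the solution
is a special (proportional) solution. -/
theorem stmt15 (A B E F : ℝ) (hA : 0 < A) (hB : 0 < B) (hE : 0 < E) (hF : 0 < F)
    (hEF : F < E) (hAB : B < A) (hBFEA : B * F < E * A)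
    (α β R : ℝ) (hα : 0 < α) (hβ : 0 < β) (hR : 0 < R)
    (up ue : ℝ → ℝ) (hsol : IsBulkSolOn A B E F α β (Ico 0 R) up ue)
    (hvp : Tendsto up (nhdsWithin R (Iio R)) (nhds 0))
    (hve : Tendsto ue (nhdsWithin R (Iio R)) (nhds 0)) :
    ∃ k : ℝ, 0 < k ∧ ∀ r ∈ Ico 0 R, ue r = k * up r := by
  obtain ⟨k, hk0, hkeq⟩ := exists_k hA hB hE hF hEF
  obtain ⟨hupC, hueC, _hupα, _hueβ, _hup'0, _hue'0, hODE, hposval⟩ := hsol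
  have hsU : UniqueDiffOn ℝ (Ico 0 R) := uniqueDiffOn_Ico 0 R
  have hupD : DifferentiableOn ℝ up (Ico 0 R) := hupC.differentiableOn (by norm_num)
  have hueD : DifferentiableOn ℝ ue (Ico 0 R) := hueC.differentiableOn (by norm_num)
  set P := derivWithin up (Ico 0 R) with hP
  set Q := derivWithin ue (Ico 0 R) with hQ
  have hPC : ContDiffOn ℝ 1 P (Ico 0 R) := hupC.derivWithin hsU (by norm_num)
  have hQC : ContDiffOn ℝ 1 Q (Ico 0 R) := hueC.derivWithin hsU (by norm_num)
  have hPD : DifferentiableOn ℝ P (Ico 0 R) := hPC.differentiableOn one_ne_zero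
  have hQD : DifferentiableOn ℝ Q (Ico 0 R) := hQC.differentiableOn one_ne_zero
  -- key rpow inequality fact at points where ue x and up x are positive
  have hk32 : ∀ x : ℝ, 0 ≤ x → k ^ ((3:ℝ)/2) * x ^ ((3:ℝ)/2) = (k * x) ^ ((3:ℝ)/2) :=
    fun x hx => (Real.mul_rpow hk0.le hx).symm
  -- τ₁ = ue - k * up
  set τ₁ : ℝ → ℝ := fun r => ue r - k * up r with hτ₁
  have hτ₁C : ContDiffOn ℝ 2 τ₁ (Ico 0 R) := hueC.sub (contDiffOn_const.mul hupC)
  have hd1 : ∀ y ∈ Ico 0 R, derivWithin τ₁ (Ico 0 R) y = Q y - k * P y := by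
    intro y hy
    rw [hτ₁]
    rw [derivWithin_fun_sub (hueD y hy) ((hupD y hy).const_mul k),
        derivWithin_const_mul k (hupD y hy)]
  have hode₁ : ∀ x ∈ Ico 0 R, 0 < x → 0 < τ₁ x →
      0 ≤ derivWithin (derivWithin τ₁ (Ico 0 R)) (Ico 0 R) x
          + 2 / x * derivWithin τ₁ (Ico 0 R) x := by
    intro x hx hx0 hτx
    have hD1 : derivWithin τ₁ (Ico 0 R) x = Q x - k * P x := hd1 x hx
    have hD2 : derivWithin (derivWithin τ₁ (Ico 0 R)) (Ico 0 R) x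
        = derivWithin Q (Ico 0 R) x - k * derivWithin P (Ico 0 R) x := by
      rw [derivWithin_congr hd1 (hd1 x hx)]
      rw [derivWithin_fun_sub (hQD x hx) ((hPD x hx).const_mul k),
          derivWithin_const_mul k (hPD x hx)]
    obtain ⟨hodeP, hodeE⟩ := hODE x hx hx0
    obtain ⟨hupx, huex⟩ := hposval x hx
    have hba : k * up x < ue x := by
      have : 0 < ue x - k * up x := hτx
      linarith
    have hrpow : (k * up x) ^ ((3:ℝ)/2) ≤ ue x ^ ((3:ℝ)/2) :=
      Real.rpow_le_rpow (by positivity) hba.le (by norm_num)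
    have hZ : (B + k * E) * ((k * up x) ^ ((3:ℝ)/2))
        = (A + k * F) * up x ^ ((3:ℝ)/2) := by
      rw [← hk32 (up x) hupx.le, ← hkeq]; ring
    have hBkE : (0:ℝ) < B + k * E := by positivity
    rw [hD2, hD1]
    have key : (derivWithin Q (Ico 0 R) x - k * derivWithin P (Ico 0 R) x)
        + 2 / x * (Q x - k * P x)
        = (B * ue x ^ ((3:ℝ)/2) - A * up x ^ ((3:ℝ)/2))
          - k * (F * up x ^ ((3:ℝ)/2) - E * ue x ^ ((3:ℝ)/2)) := by
      rw [← hodeE, ← hodeP]; ring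
    rw [key]
    nlinarith [mul_le_mul_of_nonneg_left hrpow hBkE.le]
  have hlim₁ : Tendsto τ₁ (nhdsWithin R (Iio R)) (nhds 0) := by
    have := hve.sub ((hvp.const_mul k))
    simpa using this
  have h₁ := aux_nonpos hR τ₁ hτ₁C hode₁ hlim₁
  -- τ₂ = k * up - ue
  set τ₂ : ℝ → ℝ := fun r => k * up r - ue r with hτ₂
  have hτ₂C : ContDiffOn ℝ 2 τ₂ (Ico 0 R) := (contDiffOn_const.mul hupC).sub hueC
  have hd2 : ∀ y ∈ Ico 0 R, derivWithin τ₂ (Ico 0 R) y = k * P y - Q y := by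
    intro y hy
    rw [hτ₂]
    rw [derivWithin_fun_sub ((hupD y hy).const_mul k) (hueD y hy),
        derivWithin_const_mul k (hupD y hy)]
  have hode₂ : ∀ x ∈ Ico 0 R, 0 < x → 0 < τ₂ x →
      0 ≤ derivWithin (derivWithin τ₂ (Ico 0 R)) (Ico 0 R) x
          + 2 / x * derivWithin τ₂ (Ico 0 R) x := by
    intro x hx hx0 hτx
    have hD1 : derivWithin τ₂ (Ico 0 R) x = k * P x - Q x := hd2 x hx
    have hD2 : derivWithin (derivWithin τ₂ (Ico 0 R)) (Ico 0 R) x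
        = k * derivWithin P (Ico 0 R) x - derivWithin Q (Ico 0 R) x := by
      rw [derivWithin_congr hd2 (hd2 x hx)]
      rw [derivWithin_fun_sub ((hPD x hx).const_mul k) (hQD x hx),
          derivWithin_const_mul k (hPD x hx)]
    obtain ⟨hodeP, hodeE⟩ := hODE x hx hx0
    obtain ⟨hupx, huex⟩ := hposval x hx
    have hba : ue x < k * up x := by
      have : 0 < k * up x - ue x := hτx
      linarith
    have hrpow : ue x ^ ((3:ℝ)/2) ≤ (k * up x) ^ ((3:ℝ)/2) :=
      Real.rpow_le_rpow huex.le hba.le (by norm_num)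
    have hZ : (B + k * E) * ((k * up x) ^ ((3:ℝ)/2))
        = (A + k * F) * up x ^ ((3:ℝ)/2) := by
      rw [← hk32 (up x) hupx.le, ← hkeq]; ring
    have hBkE : (0:ℝ) < B + k * E := by positivity
    rw [hD2, hD1]
    have key : (k * derivWithin P (Ico 0 R) x - derivWithin Q (Ico 0 R) x)
        + 2 / x * (k * P x - Q x)
        = k * (F * up x ^ ((3:ℝ)/2) - E * ue x ^ ((3:ℝ)/2))
          - (B * ue x ^ ((3:ℝ)/2) - A * up x ^ ((3:ℝ)/2)) := by
      rw [← hodeE, ← hodeP]; ring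
    rw [key]
    nlinarith [mul_le_mul_of_nonneg_left hrpow hBkE.le]
  have hlim₂ : Tendsto τ₂ (nhdsWithin R (Iio R)) (nhds 0) := by
    have := (hvp.const_mul k).sub hve
    simpa using this
  have h₂ := aux_nonpos hR τ₂ hτ₂C hode₂ hlim₂
  refine ⟨k, hk0, fun r hr => ?_⟩
  have e1 := h₁ r hr
  have e2 := h₂ r hr
  simp only [hτ₁] at e1
  simp only [hτ₂] at e2
  linarith
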